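/- Given any open set U contained in an open interval I with rational endpoints, there is a family G of pairwise disjoint open intervals with rational endpoints such that cl(J) ⊆ I for every J ∈ G and ⋃G ⊆ U ⊆ ⋃G ∪ ℚ. -/

import Mathlib

/-- Dyadic interval of level `n` starting at `k/2^n`. -/
def dyI (n : ℕ) (k : ℤ) : Set ℝ := Set.Ioo ((k : ℝ) / 2 ^ n) (((k : ℝ) + 1) / 2 ^ n)

lemma two_pow_pos' (n : ℕ) : (0 : ℝ) < 2 ^ n := by positivity

lemma dyI_lt (n : ℕ) (k : ℤ) : ((k : ℝ) / 2 ^ n) < ((k : ℝ) + 1) / 2 ^ n := by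
  have h := two_pow_pos' n
  rw [div_lt_div_iff_of_pos_right h]
  linarith

lemma closure_dyI (n : ℕ) (k : ℤ) :
    closure (dyI n k) = Set.Icc ((k : ℝ) / 2 ^ n) (((k : ℝ) + 1) / 2 ^ n) :=
  closure_Ioo (ne_of_lt (dyI_lt n k))

lemma mem_dyI_iff {x : ℝ} {n : ℕ} {k : ℤ} :
    x ∈ dyI n k ↔ (k : ℝ) < x * 2 ^ n ∧ x * 2 ^ n < (k : ℝ) + 1 := by
  have h := two_pow_pos' n
  constructor
  · rintro ⟨h1, h2⟩
    constructor
    · rw [div_lt_iff₀ h] at h1; nlinarith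
    · rw [lt_div_iff₀ h] at h2; nlinarith
  · rintro ⟨h1, h2⟩
    constructor
    · rw [div_lt_iff₀ h]; nlinarith
    · rw [lt_div_iff₀ h]; nlinarith

lemma irrational_mem_dyI {x : ℝ} (hx : Irrational x) (n : ℕ) :
    x ∈ dyI n ⌊x * 2 ^ n⌋ := by
  rw [mem_dyI_iff]
  refine ⟨lt_of_le_of_ne (Int.floor_le _) ?_, Int.lt_floor_add_one _⟩
  intro h
  apply hx
  refine ⟨(⌊x * 2 ^ n⌋ : ℚ) / 2 ^ n, ?_⟩
  have h2 := two_pow_pos' n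
  push_cast
  field_simp
  linarith [h]

lemma dyI_unique {x : ℝ} {n : ℕ} {k : ℤ} (h : x ∈ dyI n k) : ⌊x * 2 ^ n⌋ = k := by
  rw [mem_dyI_iff] at h
  exact Int.floor_eq_iff.2 ⟨le_of_lt h.1, h.2⟩

lemma dyI_nest {n m : ℕ} {k l : ℤ} (hnm : m ≤ n) (h : (dyI n k ∩ dyI m l).Nonempty) :
    dyI n k ⊆ dyI m l := by
  obtain ⟨y, hy1, hy2⟩ := h
  rw [mem_dyI_iff] at hy1 hy2
  set d : ℕ := n - m with hd
  have hnd : n = m + d := by omega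
  have h2n : (2 : ℝ) ^ n = 2 ^ m * 2 ^ d := by rw [hnd, pow_add]
  -- from the common point: l * 2^d ≤ k and k + 1 ≤ (l+1) * 2^d  (in ℤ)
  have hlow : l * 2 ^ d ≤ k := by
    have : ((l : ℝ) * 2 ^ d) < (k : ℝ) + 1 := by
      have h2 := two_pow_pos' d
      have hmul : (l : ℝ) * 2 ^ d < y * 2 ^ m * 2 ^ d :=
        mul_lt_mul_of_pos_right hy2.1 h2
      have heq : y * 2 ^ m * 2 ^ d = y * 2 ^ n := by rw [h2n]; ring
      linarith [hy1.2, heq ▸ hmul]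
    have : ((l * 2 ^ d : ℤ) : ℝ) < ((k + 1 : ℤ) : ℝ) := by push_cast; linarith
    have := Int.cast_lt.mp this
    omega
  have hhigh : k + 1 ≤ (l + 1) * 2 ^ d := by
    have : (k : ℝ) < ((l : ℝ) + 1) * 2 ^ d := by
      have h2 := two_pow_pos' d
      have hmul : y * 2 ^ m * 2 ^ d < ((l : ℝ) + 1) * 2 ^ d :=
        mul_lt_mul_of_pos_right hy2.2 h2
      have heq : y * 2 ^ m * 2 ^ d = y * 2 ^ n := by rw [h2n]; ring
      linarith [hy1.1, heq ▸ hmul]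
    have : ((k : ℤ) : ℝ) < (((l + 1) * 2 ^ d : ℤ) : ℝ) := by push_cast; linarith
    have := Int.cast_lt.mp this
    omega
  intro z hz
  rw [mem_dyI_iff] at hz ⊢
  have h2d := two_pow_pos' d
  have hzn : z * 2 ^ n = z * 2 ^ m * 2 ^ d := by rw [h2n]; ring
  have hlowR : (l : ℝ) * 2 ^ d ≤ (k : ℝ) := by exact_mod_cast (by exact_mod_cast hlow : ((l * 2 ^ d : ℤ) : ℝ) ≤ (k : ℤ))
  have hhighR : (k : ℝ) + 1 ≤ ((l : ℝ) + 1) * 2 ^ d := by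
    have : (((k + 1 : ℤ)) : ℝ) ≤ (((l + 1) * 2 ^ d : ℤ) : ℝ) := by exact_mod_cast hhigh
    push_cast at this; linarith
  constructor
  · nlinarith [hz.1]
  · nlinarith [hz.2]

theorem stmt19 (a b : ℚ) (hab : (a : ℝ) < (b : ℝ)) (U : Set ℝ)
    (hU : IsOpen U) (hUI : U ⊆ Set.Ioo (a : ℝ) (b : ℝ)) :
    ∃ G : Set (Set ℝ),
      (∀ J ∈ G, ∃ p q : ℚ, (p : ℝ) < (q : ℝ) ∧ J = Set.Ioo (p : ℝ) (q : ℝ)) ∧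
      G.PairwiseDisjoint id ∧
      (∀ J ∈ G, closure J ⊆ Set.Ioo (a : ℝ) (b : ℝ)) ∧
      ⋃₀ G ⊆ U ∧
      U ⊆ ⋃₀ G ∪ Set.range ((↑) : ℚ → ℝ) := by
  classical
  set G : Set (Set ℝ) :=
    {J | ∃ (x : ℝ) (n : ℕ), Irrational x ∧ closure (dyI n ⌊x * 2 ^ n⌋) ⊆ U ∧
      (∀ m, m < n → ¬ closure (dyI m ⌊x * 2 ^ m⌋) ⊆ U) ∧ J = dyI n ⌊x * 2 ^ n⌋} with hG
  -- key disjointness lemma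
  have key : ∀ (x y : ℝ) (n m : ℕ), Irrational y → n ≤ m →
      (∀ j, j < m → ¬ closure (dyI j ⌊y * 2 ^ j⌋) ⊆ U) →
      closure (dyI n ⌊x * 2 ^ n⌋) ⊆ U →
      dyI n ⌊x * 2 ^ n⌋ ≠ dyI m ⌊y * 2 ^ m⌋ →
      Disjoint (dyI n ⌊x * 2 ^ n⌋) (dyI m ⌊y * 2 ^ m⌋) := by
    intro x y n m hy hnm hmin hclx hne
    by_contra hdis
    rw [Set.not_disjoint_iff_nonempty_inter] at hdis
    have hsub : dyI m ⌊y * 2 ^ m⌋ ⊆ dyI n ⌊x * 2 ^ n⌋ :=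
      dyI_nest hnm (by rwa [Set.inter_comm] at hdis)
    rcases eq_or_lt_of_le hnm with heq | hlt
    · subst heq
      exact hne (le_antisymm (dyI_nest le_rfl hdis) hsub)
    · have hymem : y ∈ dyI n ⌊x * 2 ^ n⌋ := hsub (irrational_mem_dyI hy m)
      have := dyI_unique hymem
      exact hmin n hlt (this ▸ hclx)
  -- existence of a good level for each irrational point of U
  have hex : ∀ x ∈ U, Irrational x → ∃ n : ℕ, closure (dyI n ⌊x * 2 ^ n⌋) ⊆ U := by
    intro x hxU hx
    obtain ⟨ε, hε, hball⟩ := Metric.isOpen_iff.1 hU x hxU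
    obtain ⟨n, hn⟩ := exists_pow_lt_of_lt_one hε (by norm_num : (1 : ℝ) / 2 < 1)
    refine ⟨n, ?_⟩
    rw [closure_dyI]
    have h2 := two_pow_pos' n
    have hpow : ((1 : ℝ) / 2) ^ n = 1 / 2 ^ n := by rw [div_pow]; norm_num
    rw [hpow] at hn
    have hfl : (⌊x * 2 ^ n⌋ : ℝ) / 2 ^ n ≤ x := by
      rw [div_le_iff₀ h2]; exact Int.floor_le _
    have hfu : x < ((⌊x * 2 ^ n⌋ : ℝ) + 1) / 2 ^ n := by
      rw [lt_div_iff₀ h2]; exact Int.lt_floor_add_one _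
    intro z hz
    apply hball
    rw [Real.ball_eq_Ioo]
    have hlen : ((⌊x * 2 ^ n⌋ : ℝ) + 1) / 2 ^ n - (⌊x * 2 ^ n⌋ : ℝ) / 2 ^ n = 1 / 2 ^ n := by
      field_simp
      ring
    constructor
    · have := hz.1; simp only [Set.mem_Icc] at hz; linarith [hz.2]
    · simp only [Set.mem_Icc] at hz; linarith [hz.1]
  refine ⟨G, ?_, ?_, ?_, ?_, ?_⟩
  · rintro J ⟨x, n, _, _, _, rfl⟩
    refine ⟨(⌊x * 2 ^ n⌋ : ℚ) / 2 ^ n, ((⌊x * 2 ^ n⌋ : ℚ) + 1) / 2 ^ n, ?_, ?_⟩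
    · push_cast
      exact dyI_lt n ⌊x * 2 ^ n⌋
    · unfold dyI
      congr 1 <;> push_cast <;> ring
  · rintro J1 ⟨x, n, hx, hclx, hminx, rfl⟩ J2 ⟨y, m, hy, hcly, hminy, rfl⟩ hne
    rcases le_total n m with h | h
    · exact key x y n m hy h hminy hclx hne
    · exact (key y x m n hx h hminx hcly (Ne.symm hne)).symm
  · rintro J ⟨x, n, _, hcl, _, rfl⟩
    exact hcl.trans hUI
  · rintro z ⟨J, ⟨x, n, _, hcl, _, rfl⟩, hz⟩
    exact hcl (subset_closure hz)
  · intro x hxU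
    by_cases hx : x ∈ Set.range ((↑) : ℚ → ℝ)
    · exact Or.inr hx
    · have hirr : Irrational x := hx
      obtain ⟨n₀, hn₀⟩ := hex x hxU hirr
      have hexn : ∃ n : ℕ, closure (dyI n ⌊x * 2 ^ n⌋) ⊆ U := ⟨n₀, hn₀⟩
      left
      refine ⟨dyI (Nat.find hexn) ⌊x * 2 ^ Nat.find hexn⌋,
        ⟨x, Nat.find hexn, hirr, Nat.find_spec hexn, fun m hm => Nat.find_min hexn hm, rfl⟩, ?_⟩
      exact irrational_mem_dyI hirr (Nat.find hexn)
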